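/- Let X₂ ∈ ℝ^{n₂×p} have full column rank, and let β̂ ∈ ℝ^p define the linear prediction function m̂(x) = xᵀβ̂. For each j let x̂_{2.j} = H_{[j]}x_{2.j} be the ghost variable of the j-th column, let X₂.ĵ be X₂ with its j-th column replaced by x̂_{2.j}, and set Ŷ₂ = X₂β̂, Ŷ₂.ĵ = X₂.ĵβ̂. Then the matrix A = (Ŷ₂ − Ŷ₂.1̂, …, Ŷ₂ − Ŷ₂.p̂) equals (X₂ − X̂₂)·diag(β̂), where X̂₂ is the matrix whose j-th column is x̂_{2.j}; consequently the relevance matrix V = (1/n₂)AᵀA equals diag(β̂)·G·diag(β̂) with G = (1/n₂)(X₂ − X̂₂)ᵀ(X₂ − X̂₂), so that entrywise v_{jk} = β̂_j β̂_k g_{jk}, and in particular the j-th diagonal element of V equals β̂_j²·σ̂²_{[j]} where σ̂²_{[j]} = g_{jj} = (1/n₂)‖x_{2.j} − x̂_{2.j}‖². -/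

import Mathlib

open Matrix

/-- **Structure of the relevance matrix in linear regression.**
Let `X₂ ∈ ℝ^{n₂×(p+1)}` have full column rank, and let `β̂` define the linear prediction
`m̂(x) = xᵀβ̂`. For each `j`, let `x̂_{2.j} = H_{[j]}x_{2.j}` be the ghost variable of the
`j`-th column, let `X₂.ĵ` be `X₂` with its `j`-th column replaced by `x̂_{2.j}`, and set
`Ŷ₂ = X₂β̂`, `Ŷ₂.ĵ = X₂.ĵβ̂`. Then `A = (Ŷ₂ − Ŷ₂.0̂, …, Ŷ₂ − Ŷ₂.p̂)` equals
`(X₂ − X̂₂)·diag(β̂)`; consequently the relevance matrix `V = (1/n₂)AᵀA` equals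
`diag(β̂)·G·diag(β̂)` with `G = (1/n₂)(X₂ − X̂₂)ᵀ(X₂ − X̂₂)`, entrywise
`v_{jk} = β̂_j β̂_k g_{jk}`, and in particular `v_{jj} = β̂_j²·σ̂²_{[j]}` with
`σ̂²_{[j]} = g_{jj} = (1/n₂)‖x_{2.j} − x̂_{2.j}‖²`. -/
theorem relevance_matrix_linear_regression
    {n₂ p : ℕ} (hn₂ : 0 < n₂)
    (X₂ : Matrix (Fin n₂) (Fin (p + 1)) ℝ)
    -- full column rank
    (hrank : LinearIndependent ℝ (fun j : Fin (p + 1) => fun i : Fin n₂ => X₂ i j))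
    (β : Fin (p + 1) → ℝ)
    -- ghost variable of the `j`-th column:
    -- `x̂_{2.j} = X_{2.[j]}(X_{2.[j]}ᵀX_{2.[j]})⁻¹X_{2.[j]}ᵀ x_{2.j}`
    (ghost : Fin (p + 1) → Fin n₂ → ℝ)
    (hghost : ∀ j, ghost j =
      (X₂.submatrix id j.succAbove *
          ((X₂.submatrix id j.succAbove)ᵀ * X₂.submatrix id j.succAbove)⁻¹ *
          (X₂.submatrix id j.succAbove)ᵀ) *ᵥ (fun i => X₂ i j))
    -- `X̂₂` : the matrix whose `j`-th column is the ghost variable `x̂_{2.j}`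
    (Xhat : Matrix (Fin n₂) (Fin (p + 1)) ℝ)
    (hXhat : Xhat = Matrix.of fun i j => ghost j i)
    -- `A`: the matrix whose `j`-th column is `Ŷ₂ − Ŷ₂.ĵ`, where `Ŷ₂ = X₂β̂` and
    -- `Ŷ₂.ĵ = X₂.ĵβ̂` with `X₂.ĵ = X₂` with its `j`-th column replaced by `x̂_{2.j}`
    (A : Matrix (Fin n₂) (Fin (p + 1)) ℝ)
    (hA : A = Matrix.of fun i j =>
      (X₂ *ᵥ β) i - ((X₂.updateCol j (ghost j)) *ᵥ β) i)
    -- the relevance matrix `V = (1/n₂)AᵀA`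
    (V : Matrix (Fin (p + 1)) (Fin (p + 1)) ℝ) (hV : V = (1 / n₂ : ℝ) • (Aᵀ * A))
    -- `G = (1/n₂)(X₂ − X̂₂)ᵀ(X₂ − X̂₂)`
    (G : Matrix (Fin (p + 1)) (Fin (p + 1)) ℝ)
    (hG : G = (1 / n₂ : ℝ) • ((X₂ - Xhat)ᵀ * (X₂ - Xhat))) :
    A = (X₂ - Xhat) * Matrix.diagonal β ∧
      V = Matrix.diagonal β * G * Matrix.diagonal β ∧
      (∀ j k, V j k = β j * β k * G j k) ∧
      (∀ j, G j j = (1 / n₂ : ℝ) *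
        (((fun i => X₂ i j) - ghost j) ⬝ᵥ ((fun i => X₂ i j) - ghost j))) ∧
      (∀ j, V j j = β j ^ 2 * G j j) := by

  have hAeq : A = (X₂ - Xhat) * Matrix.diagonal β := by
    subst hA hXhat
    ext i j
    have hL : ∀ x : Fin (p+1), X₂ i x * β x - (if x = j then ghost j i else X₂ i x) * β x
        = if x = j then (X₂ i j - ghost j i) * β j else 0 := by
      intro x; by_cases h : x = j <;> simp [h] <;> ring
    simp only [Matrix.mul_diagonal, Matrix.sub_apply, Matrix.of_apply, Matrix.mulVec,
      dotProduct, Matrix.updateCol_apply]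
    rw [← Finset.sum_sub_distrib, Finset.sum_congr rfl (fun x _ => hL x)]
    simp
  have hVeq : V = Matrix.diagonal β * G * Matrix.diagonal β := by
    rw [hV, hG, hAeq, Matrix.transpose_mul, Matrix.diagonal_transpose,
      Matrix.mul_smul, Matrix.smul_mul]
    congr 1
    simp only [Matrix.mul_assoc]
  refine ⟨hAeq, hVeq, ?_, ?_, ?_⟩
  · intro j k
    rw [hVeq]
    simp only [Matrix.mul_apply, Matrix.diagonal_apply, ite_mul, mul_ite, zero_mul, mul_zero,
      Finset.sum_ite_eq, Finset.sum_ite_eq', Finset.mem_univ, if_true]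
    ring
  · intro j
    rw [hG, hXhat]
    simp [Matrix.mul_apply, dotProduct, Finset.mul_sum]
  · intro j
    rw [hVeq]
    simp only [Matrix.mul_apply, Matrix.diagonal_apply, ite_mul, mul_ite, zero_mul, mul_zero,
      Finset.sum_ite_eq, Finset.sum_ite_eq', Finset.mem_univ, if_true]
    ring
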